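/- arXiv:1905.04087 — 3 statements merged into one kernel-verified Lean document; each statement's English description precedes it below -/
import Mathlib

section
/- Let E be a strictly convex normed space whose norm is Fréchet differentiable away from 0, with a 1-suppression unconditional Schauder basis {eₙ}. Then for every w = Σ wⱼeⱼ ∈ E \ {0} and every index j₀, if w_{j₀} ≠ 0 then D‖·‖(w)(e_{j₀}) ≠ 0. -/
/-- In a strictly convex space with a `1`-suppression unconditional Schauder
basis `e` (with biorthogonal coordinate functionals `c`), if the norm is
Fréchet differentiable at `w ≠ 0` and the `j₀`-th coordinate of `w` is nonzero,
then the derivative of the norm at `w` does not vanish on `e j₀`. -/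
theorem norm_deriv_nonzero_on_basis_vector
    (E : Type*) [NormedAddCommGroup E] [NormedSpace ℝ E] [StrictConvexSpace ℝ E]
    (e : ℕ → E) (c : ℕ → (E →L[ℝ] ℝ))
    (hbi : ∀ i j, c i (e j) = if i = j then 1 else 0)
    (hexp : ∀ x : E, HasSum (fun n => c n x • e n) x)
    (hsupp : ∀ (x : E) (j₀ : ℕ), ‖x - c j₀ x • e j₀‖ ≤ ‖x‖)
    (w : E) (hw : w ≠ 0)
    (D : E →L[ℝ] ℝ) (hD : HasFDerivAt (fun z : E => ‖z‖) D w)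
    (j₀ : ℕ) (hj₀ : c j₀ w ≠ 0) :
    D (e j₀) ≠ 0 := by
  intro hDe
  set u : E := c j₀ w • e j₀ with hu
  set v : E := w - u with hv
  have hDu : D u = 0 := by simp [hu, hDe]
  -- the operator norm of D is at most 1
  have hDnorm : ‖D‖ ≤ 1 := by
    have := hD.le_of_lipschitz (C := 1) (by simpa using lipschitzWith_one_norm (E := E))
    simpa using this
  have hDle : ∀ x : E, D x ≤ ‖x‖ := fun x => by
    calc D x ≤ |D x| := le_abs_self _
    _ = ‖D x‖ := rfl
    _ ≤ ‖D‖ * ‖x‖ := D.le_opNorm x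
    _ ≤ 1 * ‖x‖ := by gcongr
    _ = ‖x‖ := one_mul _
  -- D w = ‖w‖ by homogeneity of the norm
  have hDw : D w = ‖w‖ := by
    have hsm : HasDerivAt (fun t : ℝ => t • w) w 1 := by
      simpa using (hasDerivAt_id (1 : ℝ)).smul_const w
    have h1 : HasDerivAt (fun t : ℝ => ‖t • w‖) (D w) 1 := by
      have hD' : HasFDerivAt (fun z : E => ‖z‖) D ((1:ℝ) • w) := by
        rwa [one_smul]
      exact hD'.comp_hasDerivAt 1 hsm
    have h2 : HasDerivAt (fun t : ℝ => t * ‖w‖) (D w) 1 := by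
      refine h1.congr_of_eventuallyEq ?_
      filter_upwards [eventually_gt_nhds (show (0:ℝ) < 1 by norm_num)] with t ht
      rw [norm_smul, Real.norm_eq_abs, abs_of_pos ht]
    have h3 : HasDerivAt (fun t : ℝ => t * ‖w‖) ‖w‖ 1 := by
      simpa using (hasDerivAt_id (1 : ℝ)).mul_const ‖w‖
    exact h2.unique h3
  have hDv : D v = ‖w‖ := by
    have : D v = D w - D u := by simp [hv]
    rw [this, hDu, hDw, sub_zero]
  have hvle : ‖v‖ ≤ ‖w‖ := by simpa [hv, hu] using hsupp w j₀
  have hvw : ‖v‖ = ‖w‖ :=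
    le_antisymm hvle (by calc ‖w‖ = D v := hDv.symm
      _ ≤ ‖v‖ := hDle v)
  have hvne : v ≠ 0 := by
    intro h
    rw [h, norm_zero] at hvw
    exact hw (norm_eq_zero.mp hvw.symm)
  have hadd : ‖v + w‖ = ‖v‖ + ‖w‖ := by
    have h1 : ‖v + w‖ ≤ ‖v‖ + ‖w‖ := norm_add_le _ _
    have h2 : ‖v‖ + ‖w‖ ≤ ‖v + w‖ := by
      calc ‖v‖ + ‖w‖ = D (v + w) := by rw [map_add, hDv, hDw, hvw]
      _ ≤ ‖v + w‖ := hDle _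
    linarith
  have hray : SameRay ℝ v w := sameRay_iff_norm_add.mpr hadd
  obtain ⟨r, s, hr, hs, hrs⟩ := hray.exists_pos hvne hw
  have hcv : c j₀ v = 0 := by simp [hv, hu, hbi]
  have : s * c j₀ w = 0 := by
    have := congrArg (c j₀) hrs
    simpa [hcv, map_smul] using this.symm
  rcases mul_eq_zero.mp this with h | h
  · exact hs.ne' h
  · exact hj₀ h
end

section
/- Let E, F be Banach spaces, U ⊆ E open, f: E → F a C¹ map, and g: U → F a C¹ map. Let δ: E → [0,∞) be a C¹ function with δ⁻¹(0) = E \ U. Suppose ‖g(x) − f(x)‖ ≤ δ(x) and ‖Dg(x) − Df(x)‖ ≤ δ(x) for all x ∈ U. Then the function G: E → F defined by G = g on U and G = f on E \ U is Fréchet differentiable at every point of the boundary ∂U, with DG(x) = Df(x) there. -/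
/-- Gluing with first-order contact: if `g` is a `C¹` approximation of `f` on an
open set `U` to within a `C¹` tolerance `δ ≥ 0` whose zero set is exactly
`E \ U` (both in values and in derivatives), then the glued map `G` (equal to
`g` on `U` and to `f` off `U`) is Fréchet differentiable at every boundary
point of `U`, with derivative `Df(x)`. -/
theorem glued_map_differentiable_at_boundary
    (E F : Type*) [NormedAddCommGroup E] [NormedSpace ℝ E] [CompleteSpace E]
    [NormedAddCommGroup F] [NormedSpace ℝ F] [CompleteSpace F]
    (U : Set E) (hU : IsOpen U)
    (f : E → F) (Df : E → (E →L[ℝ] F)) (hf : ∀ x, HasFDerivAt f (Df x) x)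
    (g : E → F) (Dg : E → (E →L[ℝ] F)) (hg : ∀ x ∈ U, HasFDerivAt g (Dg x) x)
    (δ : E → ℝ) (hδ : ContDiff ℝ 1 δ) (hδ0 : ∀ x, 0 ≤ δ x)
    (hδU : ∀ x, δ x = 0 ↔ x ∉ U)
    (happrox : ∀ x ∈ U, ‖g x - f x‖ ≤ δ x)
    (happrox' : ∀ x ∈ U, ‖Dg x - Df x‖ ≤ δ x)
    (G : E → F) (hG : ∀ x ∈ U, G x = g x) (hG' : ∀ x ∉ U, G x = f x) :
    ∀ x ∈ frontier U, HasFDerivAt G (Df x) x := by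
  intro x hx
  have hxU : x ∉ U := by
    rw [hU.frontier_eq] at hx
    exact hx.2
  have hδx : δ x = 0 := (hδU x).mpr hxU
  have hGx : G x = f x := hG' x hxU
  -- derivative of δ at x is zero (local min)
  have hmin : IsLocalMin δ x := Filter.Eventually.of_forall fun y => hδx ▸ hδ0 y
  have hδd : HasFDerivAt δ (0 : E →L[ℝ] ℝ) x := by
    have h := (hδ.differentiable one_ne_zero x).hasFDerivAt
    rwa [hmin.fderiv_eq_zero] at h
  have h1 : (fun y => δ y - δ x - (0 : E →L[ℝ] ℝ) (y - x)) =o[nhds x] fun y => y - x :=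
    hδd.isLittleO
  have key : (fun y => G y - f y) =o[nhds x] fun y => y - x := by
    refine Asymptotics.IsBigO.trans_isLittleO ?_ h1
    rw [Asymptotics.isBigO_iff]
    refine ⟨1, Filter.Eventually.of_forall fun y => ?_⟩
    simp only [hδx, ContinuousLinearMap.zero_apply, sub_zero, one_mul, Real.norm_eq_abs,
      abs_of_nonneg (hδ0 y)]
    by_cases hy : y ∈ U
    · rw [hG y hy]
      exact happrox y hy
    · rw [hG' y hy, sub_self, norm_zero]
      exact hδ0 y
  have hf' := (hf x).isLittleO
  refine .of_isLittleO ?_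
  have := hf'.add key
  refine this.congr' (Filter.Eventually.of_forall fun y => ?_) (Filter.Eventually.of_forall fun _ => rfl)
  rw [hGx]
  abel
end

section
/- In the setting of the previous gluing: with the same hypotheses (G = g on U, G = f off U, ‖g − f‖ ≤ δ and ‖Dg − Df‖ ≤ δ on U, δ C¹ with δ⁻¹(0) = E \ U), the glued map G is C¹ on all of E, i.e. x ↦ DG(x) is continuous. -/
/-- Gluing with first-order contact, `C¹` version: with `f` of class `C¹` on
`E`, `g` of class `C¹` on the open set `U`, `δ` of class `C¹`, nonnegative,
with zero set exactly `E \ U`, and `‖g − f‖ ≤ δ`, `‖Dg − Df‖ ≤ δ` on `U`, the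
glued map `G` (equal to `g` on `U`, to `f` off `U`) is `C¹` on all of `E`. -/
theorem glued_map_contDiff
    (E F : Type*) [NormedAddCommGroup E] [NormedSpace ℝ E] [CompleteSpace E]
    [NormedAddCommGroup F] [NormedSpace ℝ F] [CompleteSpace F]
    (U : Set E) (hU : IsOpen U)
    (f : E → F) (hf : ContDiff ℝ 1 f)
    (g : E → F) (hg : ContDiffOn ℝ 1 g U)
    (δ : E → ℝ) (hδ : ContDiff ℝ 1 δ) (hδ0 : ∀ x, 0 ≤ δ x)
    (hδU : ∀ x, δ x = 0 ↔ x ∉ U)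
    (happrox : ∀ x ∈ U, ‖g x - f x‖ ≤ δ x)
    (happrox' : ∀ x ∈ U, ‖fderiv ℝ g x - fderiv ℝ f x‖ ≤ δ x)
    (G : E → F) (hG : ∀ x ∈ U, G x = g x) (hG' : ∀ x ∉ U, G x = f x) :
    ContDiff ℝ 1 G := by
  classical
  set D : E → (E →L[ℝ] F) := fun x => if x ∈ U then fderiv ℝ g x else fderiv ℝ f x with hD
  -- global bound ‖G y - f y‖ ≤ δ y
  have hGf : ∀ y, ‖G y - f y‖ ≤ δ y := by
    intro y
    by_cases hy : y ∈ U
    · rw [hG y hy]; exact happrox y hy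
    · rw [hG' y hy, sub_self, norm_zero]; exact hδ0 y
  -- derivative of G at points of U
  have hderivU : ∀ x ∈ U, HasFDerivAt G (D x) x := by
    intro x hx
    have hgx : DifferentiableAt ℝ g x :=
      (hg.differentiableOn one_ne_zero x hx).differentiableAt (hU.mem_nhds hx)
    have : HasFDerivAt g (fderiv ℝ g x) x := hgx.hasFDerivAt
    have heq : G =ᶠ[nhds x] g :=
      Filter.eventuallyEq_of_mem (hU.mem_nhds hx) hG
    simpa [hD, if_pos hx] using this.congr_of_eventuallyEq heq
  -- derivative of G at points outside U
  have hderivC : ∀ x ∉ U, HasFDerivAt G (D x) x := by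
    intro x hx
    have hδx : δ x = 0 := (hδU x).mpr hx
    have hδdiff : DifferentiableAt ℝ δ x := (hδ.differentiable one_ne_zero).differentiableAt
    have hmin : IsLocalMin δ x := by
      apply IsMinOn.isLocalMin (s := Set.univ)
      · intro y _
        simp [hδx, hδ0 y]
      · exact Filter.univ_mem
    have hδ' : HasFDerivAt δ (0 : E →L[ℝ] ℝ) x := by
      have := hδdiff.hasFDerivAt
      rwa [hmin.fderiv_eq_zero] at this
    -- G - f has derivative 0 at x
    have ho : (fun y => δ y) =o[nhds x] fun y => y - x := by
      have := hδ'.isLittleO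
      simpa [hδx] using this
    have hO : (fun y => G y - f y) =O[nhds x] fun y => δ y := by
      apply Asymptotics.IsBigO.of_bound 1
      filter_upwards with y
      simpa [Real.norm_of_nonneg (hδ0 y)] using hGf y
    have hGfx : G x - f x = 0 := by rw [hG' x hx, sub_self]
    have hdiff0 : HasFDerivAt (fun y => G y - f y) (0 : E →L[ℝ] F) x := by
      apply HasFDerivAt.of_isLittleO
      simpa [hGfx] using hO.trans_isLittleO ho
    have hfx : HasFDerivAt f (fderiv ℝ f x) x :=
      ((hf.differentiable one_ne_zero) x).hasFDerivAt
    have : HasFDerivAt (fun y => f y + (G y - f y)) (fderiv ℝ f x + 0) x :=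
      hfx.add hdiff0
    simpa [hD, if_neg hx] using this
  have hderiv : ∀ x, HasFDerivAt G (D x) x := by
    intro x
    by_cases hx : x ∈ U
    · exact hderivU x hx
    · exact hderivC x hx
  have hfdG : fderiv ℝ G = D := funext fun x => (hderiv x).fderiv
  -- continuity of D
  have hfcont : Continuous (fderiv ℝ f) := (contDiff_one_iff_fderiv.mp hf).2
  have hDcont : Continuous D := by
    rw [continuous_iff_continuousAt]
    intro x
    by_cases hx : x ∈ U
    · have hgc : ContinuousOn (fderiv ℝ g) U :=
        hg.continuousOn_fderiv_of_isOpen hU le_rfl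
      have : ContinuousAt (fderiv ℝ g) x := hgc.continuousAt (hU.mem_nhds hx)
      apply this.congr
      filter_upwards [hU.mem_nhds hx] with y hy
      simp [hD, if_pos hy]
    · have hδx : δ x = 0 := (hδU x).mpr hx
      -- global bound ‖D y - fderiv f x‖ ≤ δ y + ‖fderiv f y - fderiv f x‖
      have hbound : ∀ y, ‖D y - fderiv ℝ f x‖ ≤ δ y + ‖fderiv ℝ f y - fderiv ℝ f x‖ := by
        intro y
        by_cases hy : y ∈ U
        · have : D y - fderiv ℝ f x =
              (fderiv ℝ g y - fderiv ℝ f y) + (fderiv ℝ f y - fderiv ℝ f x) := by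
            simp [hD, if_pos hy]
          rw [this]
          exact (norm_add_le _ _).trans (add_le_add_left (happrox' y hy) _)
        · have : D y = fderiv ℝ f y := by simp [hD, if_neg hy]
          rw [this]
          linarith [hδ0 y]
      have htend : Filter.Tendsto (fun y => δ y + ‖fderiv ℝ f y - fderiv ℝ f x‖)
          (nhds x) (nhds 0) := by
        have h1 : Filter.Tendsto δ (nhds x) (nhds 0) := by
          simpa [hδx] using (hδ.continuous.tendsto x)
        have h2 : Filter.Tendsto (fun y => ‖fderiv ℝ f y - fderiv ℝ f x‖)
            (nhds x) (nhds 0) := by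
          have := (hfcont.tendsto x).sub_const (fderiv ℝ f x)
          simpa using this.norm
        simpa using h1.add h2
      have hnorm : Filter.Tendsto (fun y => ‖D y - fderiv ℝ f x‖) (nhds x) (nhds 0) :=
        squeeze_zero (fun y => norm_nonneg _) hbound htend
      have : Filter.Tendsto D (nhds x) (nhds (fderiv ℝ f x)) :=
        tendsto_iff_norm_sub_tendsto_zero.mpr hnorm
      unfold ContinuousAt
      simpa [hD, if_neg hx] using this
  exact contDiff_one_iff_fderiv.mpr ⟨fun x => (hderiv x).differentiableAt, hfdG ▸ hDcont⟩
end
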